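/- Let p̌ ∈ (0,1), let σ > 0, and let G_1, G_2, … be i.i.d. real random variables such that μ = E[G_t] satisfies 0 < |μ| ≤ σ and G_t − μ is σ²-sub-Gaussian. Let τ = min{s ≥ 3 : |(1/s) Σ_{t=1}^s G_t| > √((5σ²/s)·log(6·log(s)/√p̌))} be the termination time of the sequential test. Then E[τ] ≤ (40σ²/μ²)·log((12/√p̌)·log(240σ²/(√p̌·μ²))) + 2. -/

import Mathlib

open MeasureTheory ProbabilityTheory Real
open scoped ENNReal NNReal


private lemma aux_enat_tsum (a : ℕ∞) :
    (a : ℝ≥0∞) = ∑' n : ℕ, Set.indicator {b : ℕ∞ | (n : ℕ∞) < b} (fun _ => (1:ℝ≥0∞)) a := by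
  classical
  induction a using ENat.recTopCoe with
  | top =>
      rw [ENat.toENNReal_top, eq_comm]
      have h : ∀ n : ℕ, Set.indicator {b : ℕ∞ | (n:ℕ∞) < b} (fun _ => (1:ℝ≥0∞)) ⊤ = 1 := by
        intro n
        exact Set.indicator_of_mem (show (⊤:ℕ∞) ∈ {b : ℕ∞ | (n:ℕ∞) < b} from ENat.coe_lt_top n) (fun _ => (1:ℝ≥0∞))
      simp only [h]
      exact ENNReal.tsum_const_eq_top_of_ne_zero one_ne_zero
  | coe k =>
      rw [ENat.toENNReal_coe]
      rw [tsum_eq_sum (s := Finset.range k)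
        (by
          intro n hn
          apply Set.indicator_of_notMem
          simp only [Set.mem_setOf_eq, Nat.cast_lt, not_lt]
          exact le_of_not_gt (fun h => hn (Finset.mem_range.mpr h)))]
      have : ∀ n ∈ Finset.range k,
          Set.indicator {b : ℕ∞ | (n:ℕ∞) < b} (fun _ => (1:ℝ≥0∞)) (k:ℕ∞) = 1 := by
        intro n hn
        refine Set.indicator_of_mem ?_ _
        show (n:ℕ∞) < (k:ℕ∞)
        exact_mod_cast Finset.mem_range.mp hn
      rw [Finset.sum_congr rfl this]
      simp

private lemma aux_mgf {Ω : Type*} [MeasurableSpace Ω] (P : Measure Ω) [IsProbabilityMeasure P]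
    (σ m : ℝ) (G : ℕ → Ω → ℝ) (hmeas : ∀ t, Measurable (G t))
    (hindep : iIndepFun G P)
    (hsubG : ∀ t, ∀ l : ℝ,
      ∫⁻ ω, ENNReal.ofReal (Real.exp (l * (G t ω - m))) ∂P ≤
        ENNReal.ofReal (Real.exp (l^2 * σ^2 / 2)))
    (n : ℕ) (l : ℝ) :
    ∫⁻ ω, ENNReal.ofReal (Real.exp (l * ((∑ t ∈ Finset.Icc 1 n, G t ω) - n * m))) ∂P ≤
      ENNReal.ofReal (Real.exp (l^2 * ((n:ℝ) * σ^2) / 2)) := by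
  induction n with
  | zero => simp
  | succ n ih =>
      have hsum : ∀ ω, (∑ t ∈ Finset.Icc 1 (n+1), G t ω)
          = (∑ t ∈ Finset.Icc 1 n, G t ω) + G (n+1) ω := by
        intro ω
        exact Finset.sum_Icc_succ_top (by omega) _
      have hSmeas : Measurable (fun ω => ∑ t ∈ Finset.Icc 1 n, G t ω) :=
        Finset.measurable_sum _ (fun t _ => hmeas t)
      set F : Ω → ℝ≥0∞ := fun ω =>
        ENNReal.ofReal (Real.exp (l * ((∑ t ∈ Finset.Icc 1 n, G t ω) - n * m))) with hF
      set H : Ω → ℝ≥0∞ := fun ω => ENNReal.ofReal (Real.exp (l * (G (n+1) ω - m))) with hH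
      have hFmeas : Measurable F := by
        apply ENNReal.measurable_ofReal.comp
        exact (Real.measurable_exp.comp ((hSmeas.sub measurable_const).const_mul l))
      have hHmeas : Measurable H := by
        apply ENNReal.measurable_ofReal.comp
        exact (Real.measurable_exp.comp (((hmeas (n+1)).sub measurable_const).const_mul l))
      have hindFH : IndepFun F H P := by
        have hbase : IndepFun (∑ t ∈ Finset.Icc 1 n, G t) (G (n+1)) P :=
          hindep.indepFun_finsetSum_of_notMem hmeas (by simp)
        have hbase' : IndepFun (fun ω => ∑ t ∈ Finset.Icc 1 n, G t ω) (G (n+1)) P := by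
          have : (∑ t ∈ Finset.Icc 1 n, G t) = fun ω => ∑ t ∈ Finset.Icc 1 n, G t ω := by
            funext ω; simp [Finset.sum_apply]
          rwa [this] at hbase
        exact hbase'.comp
          (ENNReal.measurable_ofReal.comp
            (Real.measurable_exp.comp ((measurable_id.sub measurable_const).const_mul l)))
          (ENNReal.measurable_ofReal.comp
            (Real.measurable_exp.comp ((measurable_id.sub measurable_const).const_mul l)))
      have hpt : ∀ ω, ENNReal.ofReal
            (Real.exp (l * ((∑ t ∈ Finset.Icc 1 (n+1), G t ω) - (n+1 : ℕ) * m)))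
          = F ω * H ω := by
        intro ω
        rw [hF, hH]
        dsimp only
        rw [← ENNReal.ofReal_mul (Real.exp_nonneg _), ← Real.exp_add]
        congr 1
        rw [hsum ω]
        push_cast
        ring
      calc ∫⁻ ω, ENNReal.ofReal
            (Real.exp (l * ((∑ t ∈ Finset.Icc 1 (n+1), G t ω) - (n+1 : ℕ) * m))) ∂P
          = ∫⁻ ω, F ω * H ω ∂P := by
            apply lintegral_congr; intro ω; exact hpt ω
        _ = (∫⁻ ω, F ω ∂P) * ∫⁻ ω, H ω ∂P :=
            lintegral_mul_eq_lintegral_mul_lintegral_of_indepFun''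
              hFmeas.aemeasurable hHmeas.aemeasurable hindFH
        _ ≤ ENNReal.ofReal (Real.exp (l^2 * ((n:ℝ) * σ^2) / 2)) *
              ENNReal.ofReal (Real.exp (l^2 * σ^2 / 2)) :=
            mul_le_mul' ih (hsubG (n+1) l)
        _ = ENNReal.ofReal (Real.exp (l^2 * (((n:ℕ)+1 : ℝ) * σ^2) / 2)) := by
            rw [← ENNReal.ofReal_mul (Real.exp_nonneg _), ← Real.exp_add]
            congr 1
            ring
        _ = ENNReal.ofReal (Real.exp (l^2 * (((n+1:ℕ):ℝ) * σ^2) / 2)) := by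
            push_cast; ring_nf

private lemma aux_chernoff {Ω : Type*} [MeasurableSpace Ω] (P : Measure Ω)
    [IsProbabilityMeasure P]
    (σ m : ℝ) (G : ℕ → Ω → ℝ) (hmeas : ∀ t, Measurable (G t))
    (hindep : iIndepFun G P)
    (hsubG : ∀ t, ∀ l : ℝ,
      ∫⁻ ω, ENNReal.ofReal (Real.exp (l * (G t ω - m))) ∂P ≤
        ENNReal.ofReal (Real.exp (l^2 * σ^2 / 2)))
    (n : ℕ) (l u : ℝ) :
    P {ω | u ≤ l * ((∑ t ∈ Finset.Icc 1 n, G t ω) - n * m)} ≤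
      ENNReal.ofReal (Real.exp (l^2 * ((n:ℝ) * σ^2) / 2 - u)) := by
  have hSmeas : Measurable (fun ω => ∑ t ∈ Finset.Icc 1 n, G t ω) :=
    Finset.measurable_sum _ (fun t _ => hmeas t)
  set f : Ω → ℝ≥0∞ := fun ω =>
    ENNReal.ofReal (Real.exp (l * ((∑ t ∈ Finset.Icc 1 n, G t ω) - n * m))) with hf
  have hfmeas : Measurable f :=
    ENNReal.measurable_ofReal.comp
      (Real.measurable_exp.comp ((hSmeas.sub measurable_const).const_mul l))
  have hsub : {ω | u ≤ l * ((∑ t ∈ Finset.Icc 1 n, G t ω) - n * m)} ⊆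
      {ω | ENNReal.ofReal (Real.exp u) ≤ f ω} := by
    intro ω hω
    exact ENNReal.ofReal_le_ofReal (Real.exp_le_exp.mpr hω)
  have hkey : ENNReal.ofReal (Real.exp u) *
      P {ω | u ≤ l * ((∑ t ∈ Finset.Icc 1 n, G t ω) - n * m)} ≤
      ENNReal.ofReal (Real.exp (l^2 * ((n:ℝ) * σ^2) / 2)) := by
    calc ENNReal.ofReal (Real.exp u) *
        P {ω | u ≤ l * ((∑ t ∈ Finset.Icc 1 n, G t ω) - n * m)}
        ≤ ENNReal.ofReal (Real.exp u) * P {ω | ENNReal.ofReal (Real.exp u) ≤ f ω} :=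
          mul_le_mul' le_rfl (measure_mono hsub)
      _ ≤ ∫⁻ ω, f ω ∂P := mul_meas_ge_le_lintegral₀ hfmeas.aemeasurable _
      _ ≤ ENNReal.ofReal (Real.exp (l^2 * ((n:ℝ) * σ^2) / 2)) :=
          aux_mgf P σ m G hmeas hindep hsubG n l
  have heu : ENNReal.ofReal (Real.exp u) ≠ 0 := by
    simp [Real.exp_pos]
  have heu' : ENNReal.ofReal (Real.exp u) ≠ ⊤ := ENNReal.ofReal_ne_top
  have hkey2 : P {ω | u ≤ l * ((∑ t ∈ Finset.Icc 1 n, G t ω) - n * m)} *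
      ENNReal.ofReal (Real.exp u) ≤
      ENNReal.ofReal (Real.exp (l^2 * ((n:ℝ) * σ^2) / 2)) := by
    rw [mul_comm]; exact hkey
  have := (ENNReal.le_div_iff_mul_le (Or.inl heu) (Or.inl heu')).mpr hkey2
  refine this.trans (le_of_eq ?_)
  rw [Real.exp_sub, ENNReal.ofReal_div_of_pos (Real.exp_pos _)]
private lemma aux_tail {Ω : Type*} [MeasurableSpace Ω] (P : Measure Ω)
    [IsProbabilityMeasure P]
    (σ m : ℝ) (hσ : 0 < σ) (G : ℕ → Ω → ℝ) (hmeas : ∀ t, Measurable (G t))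
    (hindep : iIndepFun G P)
    (hsubG : ∀ t, ∀ l : ℝ,
      ∫⁻ ω, ENNReal.ofReal (Real.exp (l * (G t ω - m))) ∂P ≤
        ENNReal.ofReal (Real.exp (l^2 * σ^2 / 2)))
    (n : ℕ) (a : ℝ) (ha : 0 < a) :
    P {ω | (n:ℝ) * a ≤ |(∑ t ∈ Finset.Icc 1 n, G t ω) - n * m|} ≤
      ENNReal.ofReal (2 * Real.exp (-((n:ℝ) * a^2) / (2 * σ^2))) := by
  set l : ℝ := a / σ^2 with hl
  set u : ℝ := (n:ℝ) * a * l with hu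
  have hσ2 : (0:ℝ) < σ^2 := by positivity
  have hl0 : 0 ≤ l := by positivity
  have hexp : l^2 * ((n:ℝ) * σ^2)/2 - u = -((n:ℝ) * a^2) / (2 * σ^2) := by
    rw [hu, hl]; field_simp; ring
  have hexp' : (-l)^2 * ((n:ℝ) * σ^2)/2 - u = -((n:ℝ) * a^2) / (2 * σ^2) := by
    rw [neg_pow]; simpa using hexp
  have hup := aux_chernoff P σ m G hmeas hindep hsubG n l u
  have hlo := aux_chernoff P σ m G hmeas hindep hsubG n (-l) u
  rw [hexp] at hup
  rw [hexp'] at hlo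
  have hincl : {ω | (n:ℝ) * a ≤ |(∑ t ∈ Finset.Icc 1 n, G t ω) - n * m|} ⊆
      {ω | u ≤ l * ((∑ t ∈ Finset.Icc 1 n, G t ω) - n * m)} ∪
      {ω | u ≤ (-l) * ((∑ t ∈ Finset.Icc 1 n, G t ω) - n * m)} := by
    intro ω hω
    simp only [Set.mem_setOf_eq] at hω
    rcases le_abs.mp hω with h | h
    · left
      show u ≤ l * _
      calc u = l * ((n:ℝ) * a) := by rw [hu]; ring
        _ ≤ l * _ := mul_le_mul_of_nonneg_left h hl0
    · right
      show u ≤ (-l) * _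
      calc u = l * ((n:ℝ) * a) := by rw [hu]; ring
        _ ≤ l * (-((∑ t ∈ Finset.Icc 1 n, G t ω) - n * m)) :=
            mul_le_mul_of_nonneg_left h hl0
        _ = (-l) * ((∑ t ∈ Finset.Icc 1 n, G t ω) - n * m) := by ring
  calc P {ω | (n:ℝ) * a ≤ |(∑ t ∈ Finset.Icc 1 n, G t ω) - n * m|}
      ≤ P ({ω | u ≤ l * ((∑ t ∈ Finset.Icc 1 n, G t ω) - n * m)} ∪
          {ω | u ≤ (-l) * ((∑ t ∈ Finset.Icc 1 n, G t ω) - n * m)}) := measure_mono hincl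
    _ ≤ P {ω | u ≤ l * ((∑ t ∈ Finset.Icc 1 n, G t ω) - n * m)} +
        P {ω | u ≤ (-l) * ((∑ t ∈ Finset.Icc 1 n, G t ω) - n * m)} := measure_union_le _ _
    _ ≤ ENNReal.ofReal (Real.exp (-((n:ℝ) * a^2) / (2 * σ^2))) +
        ENNReal.ofReal (Real.exp (-((n:ℝ) * a^2) / (2 * σ^2))) := add_le_add hup hlo
    _ = ENNReal.ofReal (2 * Real.exp (-((n:ℝ) * a^2) / (2 * σ^2))) := by
        rw [← ENNReal.ofReal_add (Real.exp_nonneg _) (Real.exp_nonneg _)]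
        congr 1; ring
private lemma aux_exp_le : Real.exp 1 ≤ 2.7182818286 := Real.exp_one_lt_d9.le

private lemma aux_log240 : (5:ℝ) ≤ Real.log 240 := by
  rw [Real.le_log_iff_exp_le (by norm_num)]
  have h5 : Real.exp 5 = Real.exp 1 ^ 5 := by
    rw [← Real.exp_nat_mul]; norm_num
  rw [h5]
  calc Real.exp 1 ^ 5 ≤ 2.7182818286 ^ 5 :=
        pow_le_pow_left₀ (Real.exp_pos 1).le aux_exp_le 5
    _ ≤ 240 := by norm_num

private lemma aux_log60 : (4:ℝ) ≤ Real.log 60 := by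
  rw [Real.le_log_iff_exp_le (by norm_num)]
  have h4 : Real.exp 4 = Real.exp 1 ^ 4 := by
    rw [← Real.exp_nat_mul]; norm_num
  rw [h4]
  calc Real.exp 1 ^ 4 ≤ 2.7182818286 ^ 4 :=
        pow_le_pow_left₀ (Real.exp_pos 1).le aux_exp_le 4
    _ ≤ 60 := by norm_num

private lemma aux_logu (u : ℝ) (hu : 0 < u) : Real.log u ≤ Real.log 240 + u / 8 := by
  by_cases h : u ≤ 240
  · have := Real.log_le_log hu h
    nlinarith
  · push_neg at h
    set v := Real.sqrt u with hv
    have hv0 : 0 < v := Real.sqrt_pos.mpr hu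
    have hv2 : v^2 = u := Real.sq_sqrt hu.le
    have hv15 : 15 ≤ v := by nlinarith
    have hlog : Real.log u = 2 * Real.log v := by
      rw [hv, Real.log_sqrt hu.le]; ring
    have hlv : Real.log v ≤ v - 1 := Real.log_le_sub_one_of_pos hv0
    have h240 := aux_log240
    nlinarith [sq_nonneg (v - 8)]
private lemma aux_claim1 (ρ A : ℝ) (hρ : 1 ≤ ρ) (hA5 : 5 ≤ A)
    (hA : Real.log (240 * ρ) ≤ A) (n : ℕ) (h3 : 3 ≤ n) :
    Real.log (Real.log n) ≤ Real.log A + (n:ℝ) / (40 * ρ) := by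
  have hρ0 : (0:ℝ) < ρ := by linarith
  have hn0 : (0:ℝ) < (n:ℝ) := by exact_mod_cast Nat.lt_of_lt_of_le (by norm_num) h3
  set x : ℝ := (n:ℝ) / (40 * ρ) with hx
  have hx0 : 0 ≤ x := by positivity
  have hlogn_pos : 0 < Real.log n := Real.log_pos (by exact_mod_cast Nat.lt_of_lt_of_le (by norm_num) h3)
  suffices h : Real.log n ≤ A * Real.exp x by
    have h2 := Real.log_le_log hlogn_pos h
    rwa [Real.log_mul (by linarith) (Real.exp_ne_zero _), Real.log_exp] at h2
  have he : x + 1 ≤ Real.exp x := Real.add_one_le_exp x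
  have hstep : A * (x + 1) ≤ A * Real.exp x :=
    mul_le_mul_of_nonneg_left he (by linarith)
  have hAx : 5 * x ≤ A * x := mul_le_mul_of_nonneg_right hA5 hx0
  set u : ℝ := (n:ℝ) / ρ with hu
  have hu0 : 0 < u := by positivity
  have h5x : 5 * x = u / 8 := by rw [hx, hu]; field_simp; ring
  have hlog240ρ : Real.log (240 * ρ) = Real.log 240 + Real.log ρ :=
    Real.log_mul (by norm_num) (by linarith)
  have hlogn : Real.log n = Real.log ρ + Real.log u := by
    rw [hu, Real.log_div (by linarith) (by linarith)]
    ring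
  have hkey := aux_logu u hu0
  nlinarith [hstep, hAx]

private lemma aux_radius (pc σ m : ℝ) (hpc : 0 < pc) (hpc1 : pc < 1) (hσ : 0 < σ)
    (hm : 0 < |m|) (hmσ : |m| ≤ σ) (n : ℕ)
    (hn : 20 * (σ^2/m^2) *
      Real.log (12 / Real.sqrt pc * Real.log (240 * σ^2 / (Real.sqrt pc * m^2))) ≤ (n:ℝ)) :
    5 * σ^2 / (n:ℝ) * Real.log (6 * Real.log n / Real.sqrt pc) ≤ 3 * m^2 / 8 := by
  have hm0 : m ≠ 0 := by
    intro h; rw [h] at hm; simp at hm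
  have hm2 : (0:ℝ) < m^2 := by positivity
  have hσ2 : (0:ℝ) < σ^2 := by positivity
  set ρ : ℝ := σ^2 / m^2 with hρdef
  have hρ1 : 1 ≤ ρ := by
    rw [hρdef, le_div_iff₀ hm2]
    have : m^2 = |m|^2 := (sq_abs m).symm
    nlinarith
  have hρ0 : (0:ℝ) < ρ := by linarith
  have hspc0 : 0 < Real.sqrt pc := Real.sqrt_pos.mpr hpc
  have hspc1 : Real.sqrt pc < 1 := by
    rw [show (1:ℝ) = Real.sqrt 1 by simp]
    exact Real.sqrt_lt_sqrt hpc.le hpc1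
  set A : ℝ := Real.log (240 * σ^2 / (Real.sqrt pc * m^2)) with hAdef
  set L : ℝ := Real.log (12 / Real.sqrt pc * A) with hLdef
  have hargA : 240 * σ^2 / (Real.sqrt pc * m^2) = 240 * ρ / Real.sqrt pc := by
    rw [hρdef]; field_simp
  have hA240 : Real.log (240 * ρ) ≤ A := by
    rw [hAdef, hargA]
    apply Real.log_le_log (by positivity)
    rw [le_div_iff₀ hspc0]
    nlinarith
  have hA5 : 5 ≤ A := by
    have h1 : (240:ℝ) ≤ 240 * ρ := by nlinarith
    have := Real.log_le_log (by norm_num) h1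
    linarith [aux_log240, hA240]
  have hL4 : 4 ≤ L := by
    have h60 : (60:ℝ) ≤ 12 / Real.sqrt pc * A := by
      have h12 : (12:ℝ) ≤ 12 / Real.sqrt pc := by
        rw [le_div_iff₀ hspc0]; nlinarith
      nlinarith
    have := Real.log_le_log (by norm_num) h60
    linarith [aux_log60]
  have hnN : 20 * ρ * L ≤ (n:ℝ) := hn
  have hn80 : (80:ℝ) ≤ (n:ℝ) := by nlinarith
  have h3 : 3 ≤ n := by exact_mod_cast (by linarith : (3:ℝ) ≤ (n:ℝ))
  have hn0 : (0:ℝ) < (n:ℝ) := by linarith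
  have hlogn_pos : 0 < Real.log n := Real.log_pos (by linarith)
  -- key log bound
  have hc1 := aux_claim1 ρ A hρ1 hA5 hA240 n h3
  have hsplit : Real.log (6 * Real.log n / Real.sqrt pc)
      = Real.log 6 + Real.log (Real.log n) - Real.log (Real.sqrt pc) := by
    rw [Real.log_div (mul_ne_zero (by norm_num) hlogn_pos.ne') hspc0.ne', Real.log_mul (by norm_num) hlogn_pos.ne']
  have hLsplit : L = Real.log 12 - Real.log (Real.sqrt pc) + Real.log A := by
    rw [hLdef, Real.log_mul (by positivity) (by linarith : (0:ℝ) < A).ne', Real.log_div (by norm_num) hspc0.ne']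
  have hlog612 : Real.log 6 ≤ Real.log 12 := Real.log_le_log (by norm_num) (by norm_num)
  have hbound : Real.log (6 * Real.log n / Real.sqrt pc) ≤ L + (n:ℝ) / (40 * ρ) := by
    rw [hsplit, hLsplit]; linarith
  have hfac : (0:ℝ) ≤ 5 * σ^2 / (n:ℝ) := by positivity
  calc 5 * σ^2 / (n:ℝ) * Real.log (6 * Real.log n / Real.sqrt pc)
      ≤ 5 * σ^2 / (n:ℝ) * (L + (n:ℝ) / (40 * ρ)) := mul_le_mul_of_nonneg_left hbound hfac
    _ = 5 * σ^2 * L / (n:ℝ) + m^2 / 8 := by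
        rw [hρdef]; field_simp; ring
    _ ≤ 5 * σ^2 * L / (20 * ρ * L) + m^2 / 8 := by
        have h20 : (0:ℝ) < 20 * ρ * L := by positivity
        have := div_le_div_of_nonneg_left (by positivity : (0:ℝ) ≤ 5 * σ^2 * L) h20 hnN
        linarith
    _ = m^2 / 4 + m^2 / 8 := by
        rw [hρdef]; field_simp; ring
    _ = 3 * m^2 / 8 := by ring

set_option maxHeartbeats 2000000 in
theorem subgaussian_sequential_test_sample_complexity
    {Ω : Type*} [MeasurableSpace Ω] (P : Measure Ω) [IsProbabilityMeasure P]
    (pc σ m : ℝ) (hpc : 0 < pc) (hpc1 : pc < 1) (hσ : 0 < σ)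
    (hm : 0 < |m|) (hmσ : |m| ≤ σ)
    (G : ℕ → Ω → ℝ)
    (hmeas : ∀ t, Measurable (G t))
    (hint : ∀ t, Integrable (G t) P)
    (hindep : iIndepFun G P)
    (hident : ∀ t, Measure.map (G t) P = Measure.map (G 0) P)
    (hmean : ∀ t, ∫ ω, G t ω ∂P = m)
    (hsubG : ∀ t, ∀ l : ℝ,
      ∫⁻ ω, ENNReal.ofReal (Real.exp (l * (G t ω - m))) ∂P ≤
        ENNReal.ofReal (Real.exp (l^2 * σ^2 / 2)))
    (τ : Ω → ℕ∞)
    (hτ : ∀ ω, τ ω = sInf {s : ℕ∞ | ∃ k : ℕ, s = (k : ℕ∞) ∧ 3 ≤ k ∧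
      Real.sqrt (5 * σ^2 / k * Real.log (6 * Real.log k / Real.sqrt pc)) <
        |(1 / (k:ℝ)) * ∑ t ∈ Finset.Icc 1 k, G t ω|}) :
    ∫⁻ ω, (τ ω : ℝ≥0∞) ∂P ≤
      ENNReal.ofReal (40 * σ^2 / m^2 *
        Real.log (12 / Real.sqrt pc * Real.log (240 * σ^2 / (Real.sqrt pc * m^2))) + 2) := by
  classical
  have hm0 : m ≠ 0 := fun h => by rw [h] at hm; simp at hm
  have hm2 : (0:ℝ) < m^2 := by positivity
  have hσ2 : (0:ℝ) < σ^2 := by positivity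
  have hspc0 : 0 < Real.sqrt pc := Real.sqrt_pos.mpr hpc
  have hspc1 : Real.sqrt pc < 1 := by
    rw [show (1:ℝ) = Real.sqrt 1 by simp]
    exact Real.sqrt_lt_sqrt hpc.le hpc1
  set A : ℝ := Real.log (240 * σ^2 / (Real.sqrt pc * m^2)) with hAdef
  set L : ℝ := Real.log (12 / Real.sqrt pc * A) with hLdef
  set ρ : ℝ := σ^2 / m^2 with hρdef
  have hρ1 : 1 ≤ ρ := by
    rw [hρdef, le_div_iff₀ hm2]
    have h : m^2 = |m|^2 := (sq_abs m).symm
    nlinarith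
  have hρ0 : (0:ℝ) < ρ := by linarith
  have hargA : 240 * σ^2 / (Real.sqrt pc * m^2) = 240 * ρ / Real.sqrt pc := by
    rw [hρdef]; field_simp
  have hA240 : Real.log (240 * ρ) ≤ A := by
    rw [hAdef, hargA]
    apply Real.log_le_log (by positivity)
    rw [le_div_iff₀ hspc0]
    nlinarith
  have hA5 : 5 ≤ A := by
    have h1 : (240:ℝ) ≤ 240 * ρ := by nlinarith
    have h2 := Real.log_le_log (by norm_num) h1
    linarith [aux_log240, hA240]
  have hL4 : 4 ≤ L := by
    have h60 : (60:ℝ) ≤ 12 / Real.sqrt pc * A := by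
      have h12 : (12:ℝ) ≤ 12 / Real.sqrt pc := by
        rw [le_div_iff₀ hspc0]; nlinarith
      nlinarith
    have h2 := Real.log_le_log (by norm_num) h60
    linarith [aux_log60]
  set N : ℕ := ⌈20 * ρ * L⌉₊ with hNdef
  have hNge : 20 * ρ * L ≤ (N:ℝ) := Nat.le_ceil _
  have hN80 : (80:ℝ) ≤ (N:ℝ) := by nlinarith
  have hN3 : 3 ≤ N := by exact_mod_cast (by linarith : (3:ℝ) ≤ (N:ℝ))
  set c : ℝ := 3 * m^2 / (40 * σ^2) with hcdef
  have hc0 : 0 < c := by rw [hcdef]; positivity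
  have hc12 : c ≤ 1/2 := by
    rw [hcdef, div_le_iff₀ (by positivity)]
    have h : m^2 = |m|^2 := (sq_abs m).symm
    nlinarith
  -- the deviation constant
  set s38 : ℝ := Real.sqrt (3/8) with hs38def
  have hs2 : s38^2 = 3/8 := Real.sq_sqrt (by norm_num)
  have hs0 : 0 ≤ s38 := Real.sqrt_nonneg _
  have hslt : s38 ≤ 0.6125 := by nlinarith
  set a : ℝ := (1 - s38) * |m| with hadef
  have ha0 : 0 < a := by
    rw [hadef]; exact mul_pos (by linarith) hm
  have ha2 : 3 * m^2 / 20 ≤ a^2 := by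
    rw [hadef, mul_pow, sq_abs]
    nlinarith
  -- characterization of the stopping time
  have hτ_iff : ∀ (ω : Ω) (n : ℕ), ((n:ℕ∞) < τ ω ↔ ∀ k : ℕ, 3 ≤ k → k ≤ n →
      |(1 / (k:ℝ)) * ∑ t ∈ Finset.Icc 1 k, G t ω| ≤
        Real.sqrt (5 * σ^2 / k * Real.log (6 * Real.log k / Real.sqrt pc))) := by
    intro ω n
    rw [hτ ω]
    constructor
    · intro h k h3 hkn
      by_contra hc
      push_neg at hc
      have hk_mem : (k:ℕ∞) ∈ {s : ℕ∞ | ∃ k' : ℕ, s = (k' : ℕ∞) ∧ 3 ≤ k' ∧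
          Real.sqrt (5 * σ^2 / k' * Real.log (6 * Real.log k' / Real.sqrt pc)) <
            |(1 / (k':ℝ)) * ∑ t ∈ Finset.Icc 1 k', G t ω|} := ⟨k, rfl, h3, hc⟩
      have h1 := sInf_le hk_mem
      have h2 : (k:ℕ∞) ≤ (n:ℕ∞) := by exact_mod_cast hkn
      exact absurd (lt_of_lt_of_le h (h1.trans h2)) (lt_irrefl _)
    · intro h
      have h1 : ((n+1:ℕ):ℕ∞) ≤ sInf {s : ℕ∞ | ∃ k : ℕ, s = (k : ℕ∞) ∧ 3 ≤ k ∧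
          Real.sqrt (5 * σ^2 / k * Real.log (6 * Real.log k / Real.sqrt pc)) <
            |(1 / (k:ℝ)) * ∑ t ∈ Finset.Icc 1 k, G t ω|} := by
        apply le_sInf
        rintro s ⟨k, rfl, h3, htrig⟩
        have hkn : ¬ k ≤ n := fun hle => absurd htrig (not_lt.mpr (h k h3 hle))
        push_neg at hkn
        exact_mod_cast hkn
      calc (n:ℕ∞) < ((n+1:ℕ):ℕ∞) := by exact_mod_cast n.lt_succ_self
        _ ≤ _ := h1
  -- measurability of the survival sets
  have hmeanmeas : ∀ k : ℕ, Measurable (fun ω =>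
      |(1 / (k:ℝ)) * ∑ t ∈ Finset.Icc 1 k, G t ω|) := by
    intro k
    exact ((Finset.measurable_sum _ (fun t _ => hmeas t)).const_mul _).abs
  have hsetmeas : ∀ n : ℕ, MeasurableSet {ω | (n:ℕ∞) < τ ω} := by
    intro n
    have heq : {ω | (n:ℕ∞) < τ ω} = ⋂ k ∈ Finset.Icc 3 n,
        {ω | |(1 / (k:ℝ)) * ∑ t ∈ Finset.Icc 1 k, G t ω| ≤
          Real.sqrt (5 * σ^2 / k * Real.log (6 * Real.log k / Real.sqrt pc))} := by
      ext ω
      simp only [Set.mem_setOf_eq, Set.mem_iInter, Finset.mem_Icc, hτ_iff ω n]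
      constructor
      · intro h k hk; exact h k hk.1 hk.2
      · intro h k h3 hkn; exact h k ⟨h3, hkn⟩
    rw [heq]
    exact MeasurableSet.biInter (Finset.Icc 3 n).countable_toSet
      (fun k _ => measurableSet_le (hmeanmeas k) measurable_const)
  -- layer-cake representation
  have hlayer : ∫⁻ ω, (τ ω : ℝ≥0∞) ∂P = ∑' n : ℕ, P {ω | (n:ℕ∞) < τ ω} := by
    have h1 : ∀ ω, (τ ω : ℝ≥0∞) =
        ∑' n : ℕ, Set.indicator {ω' | (n:ℕ∞) < τ ω'} (fun _ => (1:ℝ≥0∞)) ω := by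
      intro ω
      rw [aux_enat_tsum (τ ω)]
      refine tsum_congr (fun n => ?_)
      by_cases h : (n:ℕ∞) < τ ω
      · rw [Set.indicator_of_mem (show τ ω ∈ {b : ℕ∞ | (n:ℕ∞) < b} from h),
          Set.indicator_of_mem (show ω ∈ {ω' | (n:ℕ∞) < τ ω'} from h)]
      · rw [Set.indicator_of_notMem (show τ ω ∉ {b : ℕ∞ | (n:ℕ∞) < b} from h),
          Set.indicator_of_notMem (show ω ∉ {ω' | (n:ℕ∞) < τ ω'} from h)]
    calc ∫⁻ ω, (τ ω : ℝ≥0∞) ∂P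
        = ∫⁻ ω, ∑' n : ℕ, Set.indicator {ω' | (n:ℕ∞) < τ ω'} (fun _ => (1:ℝ≥0∞)) ω ∂P :=
          lintegral_congr h1
      _ = ∑' n : ℕ, ∫⁻ ω, Set.indicator {ω' | (n:ℕ∞) < τ ω'} (fun _ => (1:ℝ≥0∞)) ω ∂P :=
          lintegral_tsum (fun n => ((measurable_const.indicator (hsetmeas n)).aemeasurable))
      _ = ∑' n : ℕ, P {ω | (n:ℕ∞) < τ ω} := by
          congr 1
          funext n
          rw [lintegral_indicator_const (hsetmeas n), one_mul]
  rw [hlayer]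
  -- termwise bound
  have hterm : ∀ n : ℕ, P {ω | (n:ℕ∞) < τ ω} ≤
      (if n < N then (1:ℝ≥0∞) else 0) +
      (if n < N then 0 else ENNReal.ofReal (2 * Real.exp (-(c * n)))) := by
    intro n
    by_cases hnN : n < N
    · simp only [if_pos hnN, add_zero]
      exact prob_le_one
    · simp only [if_neg hnN, zero_add]
      push_neg at hnN
      have h3n : 3 ≤ n := le_trans hN3 hnN
      have hn0 : (0:ℝ) < (n:ℝ) := by exact_mod_cast Nat.lt_of_lt_of_le (by norm_num) h3n
      -- radius bound
      have hnreal : 20 * (σ^2/m^2) *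
          Real.log (12 / Real.sqrt pc * Real.log (240 * σ^2 / (Real.sqrt pc * m^2))) ≤ (n:ℝ) := by
        have h1 : (N:ℝ) ≤ (n:ℝ) := by exact_mod_cast hnN
        have h2 : 20 * ρ * L ≤ (n:ℝ) := le_trans hNge h1
        rw [hρdef, hLdef, hAdef] at h2
        convert h2 using 2
      have hrad := aux_radius pc σ m hpc hpc1 hσ hm hmσ n hnreal
      have hrn : Real.sqrt (5 * σ^2 / n * Real.log (6 * Real.log n / Real.sqrt pc)) ≤
          s38 * |m| := by
        calc Real.sqrt (5 * σ^2 / n * Real.log (6 * Real.log n / Real.sqrt pc))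
            ≤ Real.sqrt (3 * m^2 / 8) := Real.sqrt_le_sqrt hrad
          _ = s38 * |m| := by
              rw [show (3:ℝ) * m^2 / 8 = 3/8 * m^2 by ring,
                Real.sqrt_mul (by norm_num) (m^2), Real.sqrt_sq_eq_abs, hs38def]
      -- inclusion into the deviation event
      have hsub : {ω | (n:ℕ∞) < τ ω} ⊆
          {ω | (n:ℝ) * a ≤ |(∑ t ∈ Finset.Icc 1 n, G t ω) - n * m|} := by
        intro ω hω
        have hmean_le := (hτ_iff ω n).mp hω n h3n le_rfl
        set Sn : ℝ := ∑ t ∈ Finset.Icc 1 n, G t ω with hSndef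
        have hSn : |Sn| = (n:ℝ) * |(1 / (n:ℝ)) * Sn| := by
          rw [abs_mul, abs_of_pos (by positivity : (0:ℝ) < 1/(n:ℝ))]
          field_simp
        have habs1 : |(n:ℝ) * m| = (n:ℝ) * |m| := by
          rw [abs_mul, Nat.abs_cast]
        have habs2 : |(n:ℝ) * m| - |Sn| ≤ |Sn - (n:ℝ) * m| := by
          rw [abs_sub_comm]
          exact abs_sub_abs_le_abs_sub _ _
        have hmul1 : (n:ℝ) * |(1 / (n:ℝ)) * Sn| ≤ (n:ℝ) * (s38 * |m|) :=
          mul_le_mul_of_nonneg_left (le_trans hmean_le hrn) hn0.le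
        show (n:ℝ) * a ≤ |Sn - (n:ℝ) * m|
        have : (n:ℝ) * a = (n:ℝ) * |m| - (n:ℝ) * (s38 * |m|) := by
          rw [hadef]; ring
        linarith
      -- tail bound
      calc P {ω | (n:ℕ∞) < τ ω}
          ≤ P {ω | (n:ℝ) * a ≤ |(∑ t ∈ Finset.Icc 1 n, G t ω) - n * m|} := measure_mono hsub
        _ ≤ ENNReal.ofReal (2 * Real.exp (-((n:ℝ) * a^2) / (2 * σ^2))) :=
            aux_tail P σ m hσ G hmeas hindep hsubG n a ha0
        _ ≤ ENNReal.ofReal (2 * Real.exp (-(c * n))) := by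
            apply ENNReal.ofReal_le_ofReal
            have hcn : c * n ≤ (n:ℝ) * a^2 / (2 * σ^2) := by
              have h := mul_le_mul_of_nonneg_left ha2
                (by positivity : (0:ℝ) ≤ (n:ℝ)/(2*σ^2))
              have e1 : (n:ℝ)/(2*σ^2) * (3*m^2/20) = c * n := by
                rw [hcdef]; field_simp; ring
              have e2 : (n:ℝ)/(2*σ^2) * a^2 = (n:ℝ) * a^2/(2*σ^2) := by ring
              linarith
            have : -((n:ℝ) * a^2) / (2 * σ^2) ≤ -(c * n) := by
              rw [neg_div]; linarith
            nlinarith [Real.exp_le_exp.mpr this, Real.exp_pos (-((n:ℝ) * a^2) / (2 * σ^2))]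
  -- sum the bound
  have hSumAll : ∑' n : ℕ, P {ω | (n:ℕ∞) < τ ω} ≤ (N : ℝ≥0∞) + ENNReal.ofReal (4 / c) := by
    calc ∑' n : ℕ, P {ω | (n:ℕ∞) < τ ω}
        ≤ ∑' n : ℕ, ((if n < N then (1:ℝ≥0∞) else 0) +
            (if n < N then 0 else ENNReal.ofReal (2 * Real.exp (-(c * n))))) :=
          ENNReal.tsum_le_tsum hterm
      _ = (∑' n : ℕ, (if n < N then (1:ℝ≥0∞) else 0)) +
            ∑' n : ℕ, (if n < N then 0 else ENNReal.ofReal (2 * Real.exp (-(c * n)))) :=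
          ENNReal.tsum_add
      _ ≤ (N : ℝ≥0∞) + ENNReal.ofReal (4 / c) := by
          apply add_le_add
          · rw [tsum_eq_sum (s := Finset.range N)
              (fun n hn => if_neg (by simpa using hn))]
            rw [Finset.sum_congr rfl (fun n hn => if_pos (Finset.mem_range.mp hn))]
            simp
          · have hle : ∀ n : ℕ, (if n < N then 0 else ENNReal.ofReal (2 * Real.exp (-(c * n))))
                ≤ ENNReal.ofReal 2 * (ENNReal.ofReal (Real.exp (-c)))^n := by
              intro n
              have he : ENNReal.ofReal (2 * Real.exp (-(c * n))) =
                  ENNReal.ofReal 2 * (ENNReal.ofReal (Real.exp (-c)))^n := by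
                rw [ENNReal.ofReal_mul (by norm_num), ← ENNReal.ofReal_pow (Real.exp_nonneg _),
                  ← Real.exp_nat_mul]
                congr 2
                ring
              by_cases h : n < N
              · simp [if_pos h]
              · rw [if_neg h, he]
            calc ∑' n : ℕ, (if n < N then 0 else ENNReal.ofReal (2 * Real.exp (-(c * n))))
                ≤ ∑' n : ℕ, ENNReal.ofReal 2 * (ENNReal.ofReal (Real.exp (-c)))^n :=
                  ENNReal.tsum_le_tsum hle
              _ = ENNReal.ofReal 2 * (1 - ENNReal.ofReal (Real.exp (-c)))⁻¹ := by
                  rw [ENNReal.tsum_mul_left, ENNReal.tsum_geometric]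
              _ ≤ ENNReal.ofReal (4 / c) := by
                  have h1c : 0 < 1 - Real.exp (-c) := by
                    have := Real.exp_lt_one_iff.mpr (by linarith : -c < 0)  -- exp(-c) < 1
                    linarith
                  have hsub1 : (1:ℝ≥0∞) - ENNReal.ofReal (Real.exp (-c)) =
                      ENNReal.ofReal (1 - Real.exp (-c)) := by
                    rw [ENNReal.ofReal_sub _ (Real.exp_nonneg _), ENNReal.ofReal_one]
                  rw [hsub1, ← ENNReal.ofReal_inv_of_pos h1c,
                    ← ENNReal.ofReal_mul (by norm_num)]
                  apply ENNReal.ofReal_le_ofReal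
                  -- 2 * (1 - exp(-c))⁻¹ ≤ 4 / c
                  have hc2 : c / 2 ≤ 1 - Real.exp (-c) := by
                    have hme : Real.exp (-c) * Real.exp c = 1 := by
                      rw [← Real.exp_add]; simp
                    have hx1 : 1 - c ≤ Real.exp (-c) := by
                      have := Real.add_one_le_exp (-c); linarith
                    have hx2 : c + 1 ≤ Real.exp c := by
                      have := Real.add_one_le_exp c; linarith
                    have hx3 : (1 - c) * c ≤ Real.exp (-c) * c :=
                      mul_le_mul_of_nonneg_right hx1 hc0.le
                    have hx4 : Real.exp (-c) * c ≤ Real.exp (-c) * (Real.exp c - 1) :=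
                      mul_le_mul_of_nonneg_left (by linarith) (Real.exp_pos _).le
                    have hx5 : Real.exp (-c) * (Real.exp c - 1) = 1 - Real.exp (-c) := by
                      rw [mul_sub, hme]; ring
                    nlinarith
                  have hinv : (1 - Real.exp (-c))⁻¹ ≤ (c/2)⁻¹ := by
                    apply inv_anti₀ (by positivity) hc2
                  calc 2 * (1 - Real.exp (-c))⁻¹ ≤ 2 * (c/2)⁻¹ := by linarith
                    _ = 4 / c := by field_simp; norm_num
  refine hSumAll.trans ?_
  -- final arithmetic
  have hNlt : (N:ℝ) < 20 * ρ * L + 1 := Nat.ceil_lt_add_one (by positivity)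
  have h4c : 4 / c = 160 / 3 * ρ := by
    rw [hcdef, hρdef]; field_simp; ring
  have hfinal : (N:ℝ) + 4 / c ≤ 40 * σ^2 / m^2 * L + 2 := by
    have hgoal : 40 * σ^2 / m^2 * L = 40 * ρ * L := by
      rw [hρdef]; ring
    rw [hgoal, h4c]
    nlinarith [mul_le_mul_of_nonneg_left hL4 (by positivity : (0:ℝ) ≤ 20 * ρ)]
  calc (N : ℝ≥0∞) + ENNReal.ofReal (4 / c)
      = ENNReal.ofReal ((N:ℝ)) + ENNReal.ofReal (4 / c) := by
        rw [ENNReal.ofReal_natCast]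
    _ = ENNReal.ofReal ((N:ℝ) + 4 / c) := by
        rw [← ENNReal.ofReal_add (by positivity) (by positivity)]
    _ ≤ ENNReal.ofReal (40 * σ^2 / m^2 * L + 2) := ENNReal.ofReal_le_ofReal hfinal
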